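/- (Uniqueness of regularly Sig-irreducible elements of a given signature.) Let s be a module term and let G be a Sig-Gröbner basis up to s. If f, g ∈ P^m are nonzero, both regularly Sig-irreducible with respect to G, and sig(f) = sig(g) = s, then there exists a nonzero scalar c ∈ F with φ(f) = c·φ(g). -/
import Mathlib


open MvPolynomial

/-- A term (power product) identified with its exponent vector in `ℕⁿ`;
the product of terms corresponds tord addition of exponent vectors. -/
abbrev Term (n : ℕ) := Fin n →₀ ℕ

/-- A module term `t·eᵢ` identified with the pair `(t, i)`. -/
abbrev MTerm (n m : ℕ) := (Fin n →₀ ℕ) × Fin m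

/-- A monomial order on terms: a linear order with `1 ≤ t` for every term `t`,
compatible with term multiplication (= addition of exponent vectors). -/
structure TermOrder (n : ℕ) where
  le : Term n → Term n → Prop
  linear : IsLinearOrder (Term n) le
  bot : ∀ t : Term n, le 0 t
  add_le_add : ∀ u v w : Term n, le u v → le (w + u) (w + v)

/-- A compatible order extension `⪯` of a monomial order tord module terms:
a linear order whose strict part is well-founded, satisfying
(i) `u ≤ v → u·eᵢ ⪯ v·eᵢ` and (ii) `t·eᵢ ⪯ t′·eⱼ → (u·t)·eᵢ ⪯ (u·t′)·eⱼ`. -/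
structure ModOrder (n m : ℕ) (tord : TermOrder n) where
  le : MTerm n m → MTerm n m → Prop
  linear : IsLinearOrder (MTerm n m) le
  wf : WellFounded (fun a b : MTerm n m => le a b ∧ a ≠ b)
  compat : ∀ u v : Term n, tord.le u v → ∀ i : Fin m, le (u, i) (v, i)
  stable : ∀ (t t' : Term n) (i j : Fin m) (u : Term n),
      le (t, i) (t', j) → le (u + t, i) (u + t', j)

variable {F : Type*} [Field F] {n m : ℕ}

/-- `IsLT tord f t` : `t` is the leading term of the polynomial `f` w.r.t. `tord`. -/
def IsLT (tord : TermOrder n) (f : MvPolynomial (Fin n) F) (t : Term n) : Prop :=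
  t ∈ f.support ∧ ∀ u ∈ f.support, tord.le u t

/-- The module homomorphism `φ : P^m → P`, `(p₁,…,p_m) ↦ Σᵢ pᵢ·fᵢ`. -/
noncomputable def phi (fs : Fin m → MvPolynomial (Fin n) F)
    (f : Fin m → MvPolynomial (Fin n) F) : MvPolynomial (Fin n) F :=
  ∑ i, f i * fs i

/-- The set of module terms occurring in a module element with nonzero coefficient. -/
def msupport (f : Fin m → MvPolynomial (Fin n) F) : Set (MTerm n m) :=
  {σ | MvPolynomial.coeff σ.1 (f σ.2) ≠ 0}

/-- `IsSig mo f σ` : `σ` is the signature of `f`, i.e. the `⪯`-largest module term of `f`. -/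
def IsSig {tord : TermOrder n} (mo : ModOrder n m tord)
    (f : Fin m → MvPolynomial (Fin n) F) (σ : MTerm n m) : Prop :=
  σ ∈ msupport f ∧ ∀ τ ∈ msupport f, mo.le τ σ

/-- Multiplication of a module element by a term `u`. -/
noncomputable def tmul (u : Term n) (f : Fin m → MvPolynomial (Fin n) F) :
    Fin m → MvPolynomial (Fin n) F :=
  fun i => MvPolynomial.monomial u (1 : F) * f i

/-- The strict part `≺` of `⪯`. -/
def mlt {tord : TermOrder n} (mo : ModOrder n m tord) (a b : MTerm n m) : Prop :=
  mo.le a b ∧ a ≠ b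

/-- `σ ≺ s` where `s` is a module term or the formal symbol `∞ = ⊤`
(with `r ≺ ∞` for every module term `r`). -/
def ltE {tord : TermOrder n} (mo : ModOrder n m tord) (σ : MTerm n m)
    (s : WithTop (MTerm n m)) : Prop :=
  ∀ τ : MTerm n m, s = ↑τ → mlt mo σ τ

/-- `σ ⪯ s` where `s` is a module term or the formal symbol `∞ = ⊤`. -/
def leE {tord : TermOrder n} (mo : ModOrder n m tord) (σ : MTerm n m)
    (s : WithTop (MTerm n m)) : Prop :=
  ∀ τ : MTerm n m, s = ↑τ → mo.le σ τ

/-- A term `t` is Sig-reducible w.r.t. `G` up tord `s` if there are `g ∈ G` and a term `u`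
with `LT(φ(u·g)) = t` and `sig(u·g) ≺ s`. -/
def SigRedTerm (tord : TermOrder n) (mo : ModOrder n m tord)
    (fs : Fin m → MvPolynomial (Fin n) F)
    (G : Finset (Fin m → MvPolynomial (Fin n) F))
    (s : WithTop (MTerm n m)) (t : Term n) : Prop :=
  ∃ g ∈ G, ∃ (u : Term n) (σ : MTerm n m),
    IsLT tord (phi fs (tmul u g)) t ∧ IsSig mo (tmul u g) σ ∧ ltE mo σ s

/-- `h` is Sig-tail-irreducible w.r.t. `G` up tord `s` : no term of `Tail(φ(h))`
is Sig-reducible w.r.t. `G` up tord `s`. -/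
def SigTailIrred (tord : TermOrder n) (mo : ModOrder n m tord)
    (fs : Fin m → MvPolynomial (Fin n) F)
    (G : Finset (Fin m → MvPolynomial (Fin n) F))
    (h : Fin m → MvPolynomial (Fin n) F) (s : WithTop (MTerm n m)) : Prop :=
  ∀ lt : Term n, IsLT tord (phi fs h) lt →
    ∀ t ∈ (phi fs h).support, t ≠ lt → ¬ SigRedTerm tord mo fs G s t

/-- A Sig-reduction step on `f` w.r.t. `G` at the term `t ∈ T(φ(f))`, producing `f'`. -/
def SigRedStepAt (tord : TermOrder n) (mo : ModOrder n m tord)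
    (fs : Fin m → MvPolynomial (Fin n) F)
    (G : Finset (Fin m → MvPolynomial (Fin n) F))
    (t : Term n) (f f' : Fin m → MvPolynomial (Fin n) F) : Prop :=
  ∃ g ∈ G, ∃ (u lg : Term n) (σf σug : MTerm n m),
    t ∈ (phi fs f).support ∧ IsLT tord (phi fs g) lg ∧ t = u + lg ∧
    IsSig mo f σf ∧ IsSig mo (tmul u g) σug ∧ mo.le σug σf ∧
    f' = f - (MvPolynomial.coeff t (phi fs f) / MvPolynomial.coeff lg (phi fs g)) • tmul u g

/-- A regular Sig-reduction step at `t` : additionally `sig(u·g) ≺ sig(f)`. -/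
def RegSigRedStepAt (tord : TermOrder n) (mo : ModOrder n m tord)
    (fs : Fin m → MvPolynomial (Fin n) F)
    (G : Finset (Fin m → MvPolynomial (Fin n) F))
    (t : Term n) (f f' : Fin m → MvPolynomial (Fin n) F) : Prop :=
  ∃ g ∈ G, ∃ (u lg : Term n) (σf σug : MTerm n m),
    t ∈ (phi fs f).support ∧ IsLT tord (phi fs g) lg ∧ t = u + lg ∧
    IsSig mo f σf ∧ IsSig mo (tmul u g) σug ∧ mlt mo σug σf ∧
    f' = f - (MvPolynomial.coeff t (phi fs f) / MvPolynomial.coeff lg (phi fs g)) • tmul u g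

/-- A Sig-reduction step on `f` w.r.t. `G`. -/
def SigRedStep (tord : TermOrder n) (mo : ModOrder n m tord)
    (fs : Fin m → MvPolynomial (Fin n) F)
    (G : Finset (Fin m → MvPolynomial (Fin n) F))
    (f f' : Fin m → MvPolynomial (Fin n) F) : Prop :=
  ∃ t : Term n, SigRedStepAt tord mo fs G t f f'

/-- A regular Sig-reduction step on `f` w.r.t. `G`. -/
def RegSigRedStep (tord : TermOrder n) (mo : ModOrder n m tord)
    (fs : Fin m → MvPolynomial (Fin n) F)
    (G : Finset (Fin m → MvPolynomial (Fin n) F))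
    (f f' : Fin m → MvPolynomial (Fin n) F) : Prop :=
  ∃ t : Term n, RegSigRedStepAt tord mo fs G t f f'

/-- `f` Sig-reduces tord zero w.r.t. `G` : `f →_{G,∗} h` for some syzygy `h`. -/
def SigReducesToZero (tord : TermOrder n) (mo : ModOrder n m tord)
    (fs : Fin m → MvPolynomial (Fin n) F)
    (G : Finset (Fin m → MvPolynomial (Fin n) F))
    (f : Fin m → MvPolynomial (Fin n) F) : Prop :=
  ∃ h, Relation.ReflTransGen (SigRedStep tord mo fs G) f h ∧ phi fs h = 0

/-- `G` is a Sig-Gröbner basis up tord the module term `s` :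
every nonzero `f` with `sig(f) ≺ s` Sig-reduces tord zero w.r.t. `G`. -/
def SigGBUpTo (tord : TermOrder n) (mo : ModOrder n m tord)
    (fs : Fin m → MvPolynomial (Fin n) F)
    (G : Finset (Fin m → MvPolynomial (Fin n) F)) (s : MTerm n m) : Prop :=
  ∀ f σ, f ≠ 0 → IsSig mo f σ → mlt mo σ s → SigReducesToZero tord mo fs G f

/-- `q` is a regular Sig-normal form of `p` w.r.t. `G`. -/
def RegNF (tord : TermOrder n) (mo : ModOrder n m tord)
    (fs : Fin m → MvPolynomial (Fin n) F)
    (G : Finset (Fin m → MvPolynomial (Fin n) F))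
    (p q : Fin m → MvPolynomial (Fin n) F) : Prop :=
  Relation.ReflTransGen (RegSigRedStep tord mo fs G) p q ∧
    ∀ q', ¬ RegSigRedStep tord mo fs G q q'

/-- `h` is singularly Sig-top-reducible w.r.t. `G` : a singular Sig-top-reduction step
applies tord `h`. -/
def SingTopReducible (tord : TermOrder n) (mo : ModOrder n m tord)
    (fs : Fin m → MvPolynomial (Fin n) F)
    (G : Finset (Fin m → MvPolynomial (Fin n) F))
    (h : Fin m → MvPolynomial (Fin n) F) : Prop :=
  ∃ t : Term n, IsLT tord (phi fs h) t ∧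
    ∃ g ∈ G, ∃ (u lg : Term n) (σh σug : MTerm n m),
      IsLT tord (phi fs g) lg ∧ t = u + lg ∧
      IsSig mo h σh ∧ IsSig mo (tmul u g) σug ∧ σug = σh

/-- The least common multiple of two terms: the pointwise maximum of exponent vectors. -/
noncomputable def lcmTerm (a b : Term n) : Term n := Finsupp.zipWith max (max_self 0) a b

/-- `p` is the S-pair of `f` and `g` and this S-pair is regular. -/
def IsRegSpair (tord : TermOrder n) (mo : ModOrder n m tord)
    (fs : Fin m → MvPolynomial (Fin n) F)
    (f g p : Fin m → MvPolynomial (Fin n) F) : Prop :=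
  ∃ lf lg : Term n, IsLT tord (phi fs f) lf ∧ IsLT tord (phi fs g) lg ∧
    (∀ σ₁ σ₂ : MTerm n m, IsSig mo (tmul (lcmTerm lf lg - lf) f) σ₁ →
      IsSig mo (tmul (lcmTerm lf lg - lg) g) σ₂ → σ₁ ≠ σ₂) ∧
    p = (MvPolynomial.coeff lf (phi fs f))⁻¹ • tmul (lcmTerm lf lg - lf) f
      - (MvPolynomial.coeff lg (phi fs g))⁻¹ • tmul (lcmTerm lf lg - lg) g

/-- `T_G(f)` : the set of terms of `f` that are reducible w.r.t. the set `G`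
of nonzero polynomials. -/
def TRed (tord : TermOrder n) (G : Finset (MvPolynomial (Fin n) F))
    (f : MvPolynomial (Fin n) F) : Set (Term n) :=
  {t | t ∈ f.support ∧ ∃ g ∈ G, ∃ lg u : Term n, IsLT tord g lg ∧ t = u + lg}

/-- An ordinary reduction step on a polynomial `p` w.r.t. the polynomials `φ(g)`, `g ∈ G`. -/
noncomputable def OrdRedStep (tord : TermOrder n)
    (fs : Fin m → MvPolynomial (Fin n) F)
    (G : Finset (Fin m → MvPolynomial (Fin n) F))
    (p p' : MvPolynomial (Fin n) F) : Prop :=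
  ∃ g ∈ G, ∃ (u lg : Term n),
    IsLT tord (phi fs g) lg ∧ (u + lg) ∈ p.support ∧
    p' = p - (MvPolynomial.coeff (u + lg) p / MvPolynomial.coeff lg (phi fs g)) •
      (MvPolynomial.monomial u (1 : F) * phi fs g)

/-- Any nonempty finite set in a linear order has a greatest element. -/
lemma exists_max_of_linear {α : Type*} {r : α → α → Prop} (hl : IsLinearOrder α r)
    (S : Finset α) (hS : S.Nonempty) : ∃ a ∈ S, ∀ b ∈ S, r b a := by
  classical
  haveI := hl
  induction S using Finset.induction with
  | empty => exact absurd hS (by simp)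
  | @insert x S hx ih =>
    rcases S.eq_empty_or_nonempty with rfl | hS'
    · exact ⟨x, by simp, by simpa using refl_of r x⟩
    · obtain ⟨a, haS, hmax⟩ := ih hS'
      rcases total_of r x a with hxa | hax
      · refine ⟨a, Finset.mem_insert_of_mem haS, ?_⟩
        intro bb hb
        rcases Finset.mem_insert.mp hb with rfl | hb
        · exact hxa
        · exact hmax _ hb
      · refine ⟨x, Finset.mem_insert_self _ _, ?_⟩
        intro bb hb
        rcases Finset.mem_insert.mp hb with rfl | hb
        · exact refl_of r bb
        · exact trans_of r (hmax _ hb) hax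

/-- Uniqueness of regularly Sig-irreducible elements of a given
signature. If `G` is a Sig-Gröbner basis up to `s` and `f, g` are nonzero,
regularly Sig-irreducible w.r.t. `G` with `sig(f) = sig(g) = s`, then
`φ(f) = c·φ(g)` for some nonzero scalar `c`. -/
theorem statement5 {F : Type*} [Field F] {n m : ℕ} (hn : 0 < n) (hm : 0 < m)
    (tord : TermOrder n) (mo : ModOrder n m tord)
    (fs : Fin m → MvPolynomial (Fin n) F) (hfs : ∀ i, fs i ≠ 0)
    (G : Finset (Fin m → MvPolynomial (Fin n) F))
    (hG0 : ∀ g ∈ G, g ≠ 0) (hGphi : ∀ g ∈ G, phi fs g ≠ 0)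
    (s : MTerm n m) (hGB : SigGBUpTo tord mo fs G s)
    (f g : Fin m → MvPolynomial (Fin n) F) (hf : f ≠ 0) (hg : g ≠ 0)
    (hfirr : ∀ f', ¬ RegSigRedStep tord mo fs G f f')
    (hgirr : ∀ g', ¬ RegSigRedStep tord mo fs G g g')
    (hsf : IsSig mo f s) (hsg : IsSig mo g s) :
    ∃ c : F, c ≠ 0 ∧ phi fs f = c • phi fs g := by
  classical
  haveI := mo.linear
  obtain ⟨hsfmem, hsfmax⟩ := hsf
  obtain ⟨hsgmem, hsgmax⟩ := hsg
  have ha0 : MvPolynomial.coeff s.1 (f s.2) ≠ 0 := hsfmem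
  have hb0 : MvPolynomial.coeff s.1 (g s.2) ≠ 0 := hsgmem
  set a : F := MvPolynomial.coeff s.1 (f s.2) with ha
  set b : F := MvPolynomial.coeff s.1 (g s.2) with hb
  set h : Fin m → MvPolynomial (Fin n) F := b • f - a • g with hhdef
  have hphih : phi fs h = b • phi fs f - a • phi fs g := by
    simp [phi, hhdef, sub_mul, smul_mul_assoc, Finset.sum_sub_distrib, Finset.smul_sum]
  have hcoeffh : ∀ τ : MTerm n m, MvPolynomial.coeff τ.1 (h τ.2)
      = b * MvPolynomial.coeff τ.1 (f τ.2) - a * MvPolynomial.coeff τ.1 (g τ.2) := by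
    intro τ
    simp [hhdef, MvPolynomial.coeff_sub, MvPolynomial.coeff_smul, smul_eq_mul]
  have hcs : MvPolynomial.coeff s.1 (h s.2) = 0 := by
    rw [hcoeffh]; ring
  have hmlt : ∀ τ ∈ msupport h, mlt mo τ s := by
    intro τ hτ
    have hτ' : MvPolynomial.coeff τ.1 (h τ.2) ≠ 0 := hτ
    have hor : MvPolynomial.coeff τ.1 (f τ.2) ≠ 0 ∨ MvPolynomial.coeff τ.1 (g τ.2) ≠ 0 := by
      by_contra hc
      push_neg at hc
      exact hτ' (by rw [hcoeffh, hc.1, hc.2]; ring)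
    have hle : mo.le τ s := by
      rcases hor with hor | hor
      · exact hsfmax τ hor
      · exact hsgmax τ hor
    refine ⟨hle, ?_⟩
    rintro rfl
    exact hτ' hcs
  by_cases hph : phi fs h = 0
  · refine ⟨a * b⁻¹, mul_ne_zero ha0 (inv_ne_zero hb0), ?_⟩
    have hba : b • phi fs f = a • phi fs g := by
      rw [hphih] at hph
      exact sub_eq_zero.mp hph
    calc phi fs f = b⁻¹ • (b • phi fs f) := by rw [inv_smul_smul₀ hb0]
      _ = b⁻¹ • (a • phi fs g) := by rw [hba]
      _ = (a * b⁻¹) • phi fs g := by rw [smul_smul, mul_comm]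
  · exfalso
    have hne : h ≠ 0 := by
      intro h0
      exact hph (by rw [h0]; simp [phi])
    set S : Finset (MTerm n m) :=
      Finset.univ.biUnion (fun i => (h i).support.image (fun t => (t, i))) with hSdef
    have hmemS : ∀ τ : MTerm n m, τ ∈ S ↔ τ ∈ msupport h := by
      intro τ
      simp only [hSdef, Finset.mem_biUnion, Finset.mem_image, Finset.mem_univ, true_and,
        MvPolynomial.mem_support_iff, msupport, Set.mem_setOf_eq]
      constructor
      · rintro ⟨i, t, ht, rfl⟩
        exact ht
      · intro hτ
        exact ⟨τ.2, τ.1, hτ, rfl⟩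
    have hSne : S.Nonempty := by
      obtain ⟨i, hi⟩ := Function.ne_iff.mp hne
      obtain ⟨t, ht⟩ := MvPolynomial.support_nonempty.mpr hi
      exact ⟨(t, i), (hmemS (t, i)).mpr (MvPolynomial.mem_support_iff.mp ht)⟩
    obtain ⟨σh, hσS, hσmax⟩ := exists_max_of_linear mo.linear S hSne
    have hσmem : σh ∈ msupport h := (hmemS σh).mp hσS
    have hsigh : IsSig mo h σh := ⟨hσmem, fun τ hτ => hσmax τ ((hmemS τ).mpr hτ)⟩
    have hσhs : mlt mo σh s := hmlt σh hσmem
    obtain ⟨h', hchain, hh'⟩ := hGB h σh hne hsigh hσhs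
    have hhne' : h ≠ h' := by
      rintro rfl
      exact hph hh'
    rcases hchain.cases_head with rfl | ⟨h₁, hstep, _⟩
    · exact hhne' rfl
    obtain ⟨t, g', hg'G, u, lg, σf', σug, hts, hltg, htdec, hsig1, hsig2, hle, _⟩ := hstep
    have hσf' : σf' = σh := antisymm (hsigh.2 _ hsig1.1) (hsig1.2 _ hsigh.1)
    have h1 : mo.le σug σh := hσf' ▸ hle
    have hσugs : mlt mo σug s :=
      ⟨trans_of mo.le h1 hσhs.1, fun e => hσhs.2 (antisymm hσhs.1 (e ▸ h1))⟩
    have hct : MvPolynomial.coeff t (phi fs h) ≠ 0 := MvPolynomial.mem_support_iff.mp hts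
    have hcth : MvPolynomial.coeff t (phi fs h)
        = b * MvPolynomial.coeff t (phi fs f) - a * MvPolynomial.coeff t (phi fs g) := by
      rw [hphih]
      simp [MvPolynomial.coeff_sub, MvPolynomial.coeff_smul, smul_eq_mul]
    by_cases hcf : MvPolynomial.coeff t (phi fs f) = 0
    · have hcg : MvPolynomial.coeff t (phi fs g) ≠ 0 := by
        intro e
        exact hct (by rw [hcth, hcf, e]; ring)
      exact hgirr _ ⟨t, g', hg'G, u, lg, s, σug, MvPolynomial.mem_support_iff.mpr hcg,
        hltg, htdec, ⟨hsgmem, hsgmax⟩, hsig2, hσugs, rfl⟩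
    · exact hfirr _ ⟨t, g', hg'G, u, lg, s, σug, MvPolynomial.mem_support_iff.mpr hcf,
        hltg, htdec, ⟨hsfmem, hsfmax⟩, hsig2, hσugs, rfl⟩
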